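/- Let E = [−2π, −π) ∪ [π, 2π). There exists a measurable set G₀ ⊆ [π/2, 7π/8) ∪ [2π, 3π) that is 2π-translation congruent to [0, π) and 2-dilation congruent to [π, 7π/4), and for any such G₀ the set G = [−π, −π/2) ∪ G₀ ∪ [7π/2, 4π) is a dyadic wavelet set contained in 2E ∪ E ∪ (1/2)E = [−4π, −π/2) ∪ [π/2, 4π) for which (E, G) is not an interpolation pair. In particular, a wavelet set contained in 2E ∪ E ∪ (1/2)E need not form an interpolation pair with E. -/

import Mathlib

open MeasureTheory Set
open scoped Real symmDiff

noncomputable section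

/-- An a.e. (modulo Lebesgue-null sets) partition of the set `A` by the family `P`. -/
def IsAEPartition {ι : Type*} (P : ι → Set ℝ) (A : Set ℝ) : Prop :=
  volume (A ∆ (⋃ i, P i)) = 0 ∧ ∀ i j : ι, i ≠ j → volume (P i ∩ P j) = 0

/-- `E ⊆ ℝ` is a dyadic wavelet set: its `2πℤ`-translates and its `2ℤ`-dilates each
partition `ℝ` modulo Lebesgue-null sets. -/
def IsDyadicWaveletSet (E : Set ℝ) : Prop :=
  MeasurableSet E ∧
  (∀ᵐ x : ℝ ∂volume, ∃! n : ℤ, x + 2 * Real.pi * n ∈ E) ∧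
  (∀ᵐ x : ℝ ∂volume, ∃! k : ℤ, (2 : ℝ) ^ k * x ∈ E)

/-- `σ` is (a representative of) the interpolation map `σ_E^F` for wavelet sets `E, F`. -/
def IsInterpolationMap (E F : Set ℝ) (σ : ℝ → ℝ) : Prop :=
  Measurable σ ∧ σ 0 = 0 ∧
  (∀ᵐ s : ℝ ∂volume, s ∈ E → σ s ∈ F ∧ ∃ n : ℤ, σ s - s = 2 * Real.pi * n) ∧
  (∀ n : ℤ, ∀ᵐ s : ℝ ∂volume, (2 : ℝ) ^ (-n) * s ∈ E →
    σ s = (2 : ℝ) ^ n * σ ((2 : ℝ) ^ (-n) * s))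

/-- The `2π`-congruence domain of a map `σ`. -/
def CongruenceDomain (σ : ℝ → ℝ) : Set ℝ :=
  {s : ℝ | ∃ n : ℤ, σ s - s = 2 * Real.pi * n}

/-- `A` is `2π`-translation congruent to `B`. -/
def TransCongruent (A B : Set ℝ) : Prop :=
  ∃ P : ℤ → Set ℝ, (∀ n, MeasurableSet (P n)) ∧ IsAEPartition P A ∧
    IsAEPartition (fun (n : ℤ) => (fun x => x + 2 * Real.pi * (n : ℝ)) '' P n) B

/-- `A` is `2`-dilation congruent to `B`. -/
def DilCongruent (A B : Set ℝ) : Prop :=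
  ∃ P : ℤ → Set ℝ, (∀ n, MeasurableSet (P n)) ∧ IsAEPartition P A ∧
    IsAEPartition (fun (n : ℤ) => (fun x => (2 : ℝ) ^ n * x) '' P n) B

/-- The properties required of the piece `G₀` in Example 8 of the paper: a measurable
subset of `[π/2, 7π/8) ∪ [2π, 3π)` that is `2π`-translation congruent to `[0, π)` and
`2`-dilation congruent to `[π, 7π/4)`. -/
def GoodGzero (G₀ : Set ℝ) : Prop :=
  MeasurableSet G₀ ∧
  G₀ ⊆ Ico (π / 2) (7 * π / 8) ∪ Ico (2 * π) (3 * π) ∧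
  TransCongruent G₀ (Ico 0 π) ∧
  DilCongruent G₀ (Ico π (7 * π / 4))

lemma affine_preimage_null (c d : ℝ) (hc : c ≠ 0) {N : Set ℝ} (hN : volume N = 0) :
    volume ((fun x => c * x + d) ⁻¹' N) = 0 := by
  have h1 : (fun x : ℝ => c * x + d) ⁻¹' N = (c • ·) ⁻¹' ((fun y => d + y) ⁻¹' N) := by
    ext x; simp [smul_eq_mul, add_comm]
  rw [h1, Measure.addHaar_preimage_smul volume hc]
  rw [measure_preimage_add, hN, mul_zero]

lemma affine_image_null (c d : ℝ) (hc : c ≠ 0) {N : Set ℝ} (hN : volume N = 0) :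
    volume ((fun x => c * x + d) '' N) = 0 := by
  have h1 : (fun x : ℝ => c * x + d) '' N = (fun y => c⁻¹ * y + (-d/c)) ⁻¹' N := by
    ext y
    simp only [mem_image, mem_preimage]
    constructor
    · rintro ⟨x, hx, rfl⟩
      have : c⁻¹ * (c * x + d) + -d / c = x := by field_simp; ring
      rwa [this]
    · intro hy
      exact ⟨c⁻¹ * y + -d / c, hy, by field_simp; ring⟩
  rw [h1]
  exact affine_preimage_null _ _ (inv_ne_zero hc) hN

lemma ae_affine {p : ℝ → Prop} (c d : ℝ) (hc : c ≠ 0) (h : ∀ᵐ x : ℝ ∂volume, p x) :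
    ∀ᵐ x : ℝ ∂volume, p (c * x + d) := by
  rw [ae_iff] at h ⊢
  exact affine_preimage_null c d hc h

lemma tiling_of_congruent (f : ℤ → ℝ → ℝ)
    (hf0 : ∀ x, f 0 x = x)
    (hgrp : ∀ m n x, f m (f n x) = f (m + n) x)
    (hq : ∀ (n : ℤ) (N : Set ℝ), volume N = 0 → volume (f n ⁻¹' N) = 0)
    (D G : Set ℝ) (hD : ∀ᵐ x : ℝ ∂volume, ∃! n : ℤ, f n x ∈ D)
    (P : ℤ → Set ℝ) (hPG : IsAEPartition P G)
    (hPD : IsAEPartition (fun n => f n '' P n) D) :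
    ∀ᵐ x : ℝ ∂volume, ∃! n : ℤ, f n x ∈ G := by
  have hinv : ∀ (n : ℤ) (x : ℝ), f (-n) (f n x) = x := by
    intro n x; rw [hgrp, neg_add_cancel, hf0]
  set N₁ : Set ℝ := G ∆ (⋃ i, P i) with hN₁
  set N₃ : Set ℝ := D ∆ (⋃ i, f i '' P i) with hN₃
  set S : ℤ → ℤ → Set ℝ := fun i j => if i = j then ∅ else (f i '' P i) ∩ (f j '' P j) with hS
  set N₄ : Set ℝ := ⋃ i, ⋃ j, S i j with hN₄
  have hN₄0 : volume N₄ = 0 := by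
    refine measure_iUnion_null fun i => measure_iUnion_null fun j => ?_
    by_cases h : i = j
    · simp [hS, h]
    · simpa [hS, h] using hPD.2 i j h
  have hNnull : volume (N₁ ∪ N₃ ∪ N₄) = 0 := by
    refine measure_union_null (measure_union_null hPG.1 hPD.1) hN₄0
  have hBad : volume ({x : ℝ | ¬ ∃! n : ℤ, f n x ∈ D} ∪ ⋃ n : ℤ, f n ⁻¹' (N₁ ∪ N₃ ∪ N₄)) = 0 := by
    refine measure_union_null ?_ (measure_iUnion_null fun n => hq n _ hNnull)
    rw [← ae_iff] ; exact hD
  rw [ae_iff]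
  refine measure_mono_null ?_ hBad
  intro x hx
  by_contra hxB
  apply hx; clear hx
  rw [mem_union] at hxB
  push_neg at hxB
  obtain ⟨hxD, hxN⟩ := hxB
  rw [mem_setOf_eq, not_not] at hxD
  have hxN' : ∀ (n : ℤ), f n x ∉ N₁ ∪ N₃ ∪ N₄ := by
    intro n hn
    exact hxN (mem_iUnion.2 ⟨n, hn⟩)
  obtain ⟨m, hmD, hmu⟩ := hxD
  -- membership transfer lemmas
  have memG : ∀ n : ℤ, f n x ∈ ⋃ i, P i → f n x ∈ G := by
    intro n hn
    by_contra hg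
    exact hxN' n (Or.inl <| Or.inl <| Set.mem_symmDiff.2 (Or.inr ⟨hn, hg⟩))
  have memUP : ∀ n : ℤ, f n x ∈ G → f n x ∈ ⋃ i, P i := by
    intro n hn
    by_contra hg
    exact hxN' n (Or.inl <| Or.inl <| Set.mem_symmDiff.2 (Or.inl ⟨hn, hg⟩))
  have memD : ∀ n : ℤ, f n x ∈ ⋃ i, f i '' P i → f n x ∈ D := by
    intro n hn
    by_contra hg
    exact hxN' n (Or.inl <| Or.inr <| Set.mem_symmDiff.2 (Or.inr ⟨hn, hg⟩))
  have memUQ : ∀ n : ℤ, f n x ∈ D → f n x ∈ ⋃ i, f i '' P i := by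
    intro n hn
    by_contra hg
    exact hxN' n (Or.inl <| Or.inr <| Set.mem_symmDiff.2 (Or.inl ⟨hn, hg⟩))
  -- key: if f n x ∈ P i then n + ... 
  have key : ∀ (n i : ℤ), f n x ∈ P i → i + n = m ∧ f m x ∈ f i '' P i := by
    intro n i hni
    have h1 : f (i + n) x ∈ f i '' P i := by
      rw [← hgrp]; exact ⟨f n x, hni, rfl⟩
    have h2 : f (i + n) x ∈ D := memD _ (mem_iUnion.2 ⟨i, h1⟩)
    have h3 : i + n = m := hmu _ h2
    exact ⟨h3, h3 ▸ h1⟩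
  -- existence
  have hex : ∃ n : ℤ, f n x ∈ G := by
    obtain ⟨i, hi⟩ := mem_iUnion.1 (memUQ m hmD)
    have hfi : f (-i) (f m x) ∈ P i := by
      obtain ⟨z, hz, hze⟩ := hi
      rw [← hze, hinv]; exact hz
    rw [hgrp] at hfi
    exact ⟨-i + m, memG _ (mem_iUnion.2 ⟨i, hfi⟩)⟩
  obtain ⟨n, hn⟩ := hex
  refine ⟨n, hn, fun n' hn' => ?_⟩
  obtain ⟨i', hi'⟩ := mem_iUnion.1 (memUP n' hn')
  obtain ⟨i, hi⟩ := mem_iUnion.1 (memUP n hn)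
  obtain ⟨h3, h4⟩ := key n i hi
  obtain ⟨h3', h4'⟩ := key n' i' hi'
  by_contra hne
  have hii : i' ≠ i := by
    intro h; apply hne; omega
  have : f m x ∈ S i' i := by
    show f m x ∈ if i' = i then (∅ : Set ℝ) else (f i' '' P i') ∩ (f i '' P i)
    rw [if_neg hii]; exact ⟨h4', h4⟩
  exact hxN' m (Or.inr (mem_iUnion.2 ⟨i', mem_iUnion.2 ⟨i, this⟩⟩))

lemma transFD : ∀ x : ℝ, ∃! n : ℤ, x + 2*π*(n:ℝ) ∈ Ico 0 (2*π) := by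
  intro x
  have hπ := Real.pi_pos
  set t := x / (2*π) with ht
  have hx : x = 2*π*t := by rw [ht]; field_simp
  have hf := Int.floor_le t
  have hf2 := Int.lt_floor_add_one t
  refine ⟨-⌊t⌋, ⟨?_, ?_⟩, ?_⟩
  · push_cast; nlinarith
  · push_cast; nlinarith
  · intro n hn
    obtain ⟨h1, h2⟩ := hn
    have hA : (n:ℝ) < (-⌊t⌋:ℤ) + 1 := by push_cast; nlinarith
    have hB : ((-⌊t⌋:ℤ):ℝ) - 1 < n := by push_cast; nlinarith
    have hA' : n < -⌊t⌋ + 1 := by exact_mod_cast hA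
    have hB' : -⌊t⌋ - 1 < n := by exact_mod_cast hB
    omega

lemma two_zpow_pos (n : ℤ) : (0:ℝ) < 2 ^ n := zpow_pos (by norm_num) n

lemma dil_unique' {y : ℝ} (hy : 0 < y) {k l : ℤ} (h1 : (2:ℝ)^k * y < 2*((2:ℝ)^l * y))
    (h2 : (2:ℝ)^l * y < 2*((2:ℝ)^k * y)) : k = l := by
  have e1 : (2:ℝ) * (2^l * y) = 2^(l+1) * y := by rw [zpow_add₀ (two_ne_zero) l 1]; ring
  have e2 : (2:ℝ) * (2^k * y) = 2^(k+1) * y := by rw [zpow_add₀ (two_ne_zero) k 1]; ring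
  rw [e1] at h1; rw [e2] at h2
  have h1' : (2:ℝ)^k < 2^(l+1) := lt_of_mul_lt_mul_right h1 hy.le
  have h2' : (2:ℝ)^l < 2^(k+1) := lt_of_mul_lt_mul_right h2 hy.le
  have := (zpow_lt_zpow_iff_right₀ (by norm_num : (1:ℝ) < 2)).1 h1'
  have := (zpow_lt_zpow_iff_right₀ (by norm_num : (1:ℝ) < 2)).1 h2'
  omega

lemma dilFD : ∀ᵐ x : ℝ ∂volume, ∃! n : ℤ, (2:ℝ)^n * x ∈ Ico (-π) (-(π/2)) ∪ Ico π (2*π) := by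
  have hπ := Real.pi_pos
  have h0 : ∀ x : ℝ, x ≠ 0 → ∃! n : ℤ, (2:ℝ)^n * x ∈ Ico (-π) (-(π/2)) ∪ Ico π (2*π) := by
    intro x hx
    rcases lt_or_gt_of_ne hx with hneg | hpos
    · -- x < 0 : land in Ico (-π) (-(π/2))
      set y := -x with hy
      have hy0 : 0 < y := by simp [hy]; linarith
      obtain ⟨m, hm1, hm2⟩ := exists_mem_Ico_zpow (div_pos hπ hy0) (by norm_num : (1:ℝ) < 2)
      have key : ∀ n : ℤ, ((2:ℝ)^n * x ∈ Ico (-π) (-(π/2)) ∪ Ico π (2*π)) ↔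
          (π/2 < 2^n * y ∧ 2^n * y ≤ π) := by
        intro n
        have hpos2 := two_zpow_pos n
        constructor
        · rintro (⟨h1, h2⟩ | ⟨h1, h2⟩)
          · refine ⟨by simp only [hy]; nlinarith, by simp only [hy]; nlinarith⟩
          · exfalso; nlinarith
        · rintro ⟨h1, h2⟩
          simp only [hy] at h1 h2
          exact Or.inl ⟨by nlinarith, by nlinarith⟩
      have hm1' : (2:ℝ)^m * y ≤ π := by rw [le_div_iff₀ hy0] at hm1; linarith
      have hm2' : π < (2:ℝ)^(m+1) * y := by rw [div_lt_iff₀ hy0] at hm2; linarith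
      have e1 : (2:ℝ)^(m+1) = 2 * 2^m := by rw [zpow_add₀ (two_ne_zero) m 1]; ring
      refine ⟨m, (key m).2 ⟨by rw [e1] at hm2'; nlinarith, hm1'⟩, ?_⟩
      intro n hn
      rw [key n] at hn
      exact dil_unique' hy0 (by nlinarith [hm2', e1]) (by nlinarith [hn.1])
    · -- x > 0 : land in Ico π (2π)
      obtain ⟨m, hm1, hm2⟩ := exists_mem_Ico_zpow (div_pos hpos hπ) (by norm_num : (1:ℝ) < 2)
      have key : ∀ n : ℤ, ((2:ℝ)^n * x ∈ Ico (-π) (-(π/2)) ∪ Ico π (2*π)) ↔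
          (π ≤ 2^n * x ∧ 2^n * x < 2*π) := by
        intro n
        have hpos2 := two_zpow_pos n
        constructor
        · rintro (⟨h1, h2⟩ | ⟨h1, h2⟩)
          · exfalso; nlinarith
          · exact ⟨h1, h2⟩
        · exact fun h => Or.inr h
      have hm1' : (2:ℝ)^m * π ≤ x := by rw [le_div_iff₀ hπ] at hm1; linarith
      have hm2' : x < (2:ℝ)^(m+1) * π := by rw [div_lt_iff₀ hπ] at hm2; linarith
      have e : (2:ℝ)^(-m) * 2^m = 1 := by rw [← zpow_add₀ (two_ne_zero)]; simp
      have h1 : π ≤ (2:ℝ)^(-m) * x := by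
        have := mul_le_mul_of_nonneg_left hm1' (two_zpow_pos (-m)).le
        rw [← mul_assoc, e, one_mul] at this; linarith
      have h2 : (2:ℝ)^(-m) * x < 2*π := by
        have := mul_lt_mul_of_pos_left hm2' (two_zpow_pos (-m))
        rw [← mul_assoc] at this
        have e2 : (2:ℝ)^(-m) * 2^(m+1) = 2 := by
          rw [← zpow_add₀ (two_ne_zero)]; norm_num
        rw [e2] at this; linarith
      refine ⟨-m, (key (-m)).2 ⟨h1, h2⟩, ?_⟩
      intro n hn
      rw [key n] at hn
      exact dil_unique' hpos (by nlinarith [hn.2, h1]) (by nlinarith [h2, hn.1])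
  rw [ae_iff]
  refine measure_mono_null (fun x hx => ?_) (measure_singleton (0:ℝ))
  simp only [mem_setOf_eq] at hx
  show x ∈ ({0} : Set ℝ)
  rw [mem_singleton_iff]
  by_contra h
  exact hx (h0 x h)

lemma image_affine_Ico (c d p q : ℝ) (hc : 0 < c) :
    (fun x => c*x+d) '' Ico p q = Ico (c*p+d) (c*q+d) := by
  ext y
  simp only [mem_image, mem_Ico]
  constructor
  · rintro ⟨x, ⟨h1, h2⟩, rfl⟩
    exact ⟨by nlinarith, by nlinarith⟩
  · rintro ⟨h1, h2⟩
    refine ⟨(y - d)/c, ⟨?_, ?_⟩, by field_simp; ring⟩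
    · rw [le_div_iff₀ hc]; nlinarith
    · rw [div_lt_iff₀ hc]; nlinarith

lemma image_add_eq (c : ℝ) (S : Set ℝ) : (fun x => x + c) '' S = (fun x => x - c) ⁻¹' S := by
  ext y
  simp only [mem_image, mem_preimage]
  constructor
  · rintro ⟨x, hx, rfl⟩; simpa using hx
  · intro h; exact ⟨y - c, h, by ring⟩

lemma affine_inj (c d : ℝ) (hc : c ≠ 0) : Function.Injective (fun x : ℝ => c*x+d) := by
  intro x y h
  simp only at h
  have : c * x = c * y := by linarith
  exact mul_left_cancel₀ hc this

def ak (k : ℕ) : ℝ := 2*π/3 + (π/12)*(1/4:ℝ)^k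
def bk (k : ℕ) : ℝ := 2*π/3 + (5*π/24)*(1/4:ℝ)^k
def Aset : Set ℝ := ⋃ k, Ico (ak k) (bk k)
def Bset : Set ℝ := Ico 0 π \ Aset
def imgB : Set ℝ := (fun x => x + 2*π) '' Bset
def Gz : Set ℝ := Aset ∪ imgB

lemma pow_q_nonneg (k : ℕ) : (0:ℝ) ≤ (1/4:ℝ)^k := by positivity
lemma pow_q_le_one (k : ℕ) : (1/4:ℝ)^k ≤ 1 := pow_le_one₀ (by norm_num) (by norm_num)

lemma hAsub : Aset ⊆ Ico (π/2) (7*π/8) := by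
  have hπ := Real.pi_pos
  intro x hx
  obtain ⟨k, h1, h2⟩ := by simpa only [Aset, mem_iUnion, mem_Ico] using hx
  have := pow_q_nonneg k
  have := pow_q_le_one k
  constructor
  · simp only [ak] at h1; nlinarith
  · simp only [bk] at h2; nlinarith

lemma hA01 : Aset ⊆ Ico 0 π := by
  have hπ := Real.pi_pos
  intro x hx
  obtain ⟨h1, h2⟩ := hAsub hx
  exact ⟨by nlinarith, by nlinarith⟩

lemma measA : MeasurableSet Aset := MeasurableSet.iUnion fun k => measurableSet_Ico

lemma measB : MeasurableSet Bset := measurableSet_Ico.diff measA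

lemma measImgB : MeasurableSet imgB := by
  rw [imgB, image_add_eq]
  exact measB.preimage (measurable_id.sub_const _)

lemma hBsub : imgB ⊆ Ico (2*π) (3*π) := by
  have hπ := Real.pi_pos
  rintro y ⟨x, hx, rfl⟩
  obtain ⟨⟨h1, h2⟩, -⟩ := hx
  simp only [mem_Ico]
  exact ⟨by linarith, by linarith⟩

lemma hABdisj : Aset ∩ imgB = ∅ := by
  have hπ := Real.pi_pos
  rw [eq_empty_iff_forall_notMem]
  rintro x ⟨hA, hB⟩
  obtain ⟨h1, h2⟩ := hA01 hA
  obtain ⟨h3, h4⟩ := hBsub hB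
  linarith

lemma hGzsub : Gz ⊆ Ico (π / 2) (7 * π / 8) ∪ Ico (2 * π) (3 * π) := by
  rintro x (hx | hx)
  · exact Or.inl (hAsub hx)
  · exact Or.inr (hBsub hx)

lemma measGz : MeasurableSet Gz := measA.union measImgB

def Ptrans : ℤ → Set ℝ := fun n => if n = 0 then Aset else if n = -1 then imgB else ∅

lemma PtransUnion : (⋃ n : ℤ, Ptrans n) = Gz := by
  apply Subset.antisymm
  · refine iUnion_subset fun n => ?_
    rw [Ptrans]
    split_ifs
    · exact subset_union_left
    · exact subset_union_right
    · exact empty_subset _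
  · rintro x (hx | hx)
    · exact mem_iUnion.2 ⟨0, by simp [Ptrans, hx]⟩
    · exact mem_iUnion.2 ⟨-1, by simp [Ptrans, hx]⟩

lemma exact_partition {ι : Type*} {P : ι → Set ℝ} {A : Set ℝ} (h : (⋃ i, P i) = A)
    (h2 : ∀ i j : ι, i ≠ j → volume (P i ∩ P j) = 0) : IsAEPartition P A := by
  refine ⟨?_, h2⟩
  rw [h, symmDiff_self]
  show volume (∅ : Set ℝ) = 0
  exact measure_empty

lemma PtransDisj : ∀ i j : ℤ, i ≠ j → volume (Ptrans i ∩ Ptrans j) = 0 := by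
  intro i j hij
  simp only [Ptrans]
  split_ifs <;>
    first
      | omega
      | simp
      | (rw [hABdisj]; simp)
      | (rw [inter_comm, hABdisj]; simp)

lemma transGz : TransCongruent Gz (Ico 0 π) := by
  refine ⟨Ptrans, ?_, exact_partition PtransUnion PtransDisj, ?_⟩
  · intro n
    rw [Ptrans]
    split_ifs
    · exact measA
    · exact measImgB
    · exact MeasurableSet.empty
  · have e0 : (fun x : ℝ => x + 2 * Real.pi * ((0:ℤ):ℝ)) '' Ptrans 0 = Aset := by
      simp [Ptrans]
    have e1 : (fun x : ℝ => x + 2 * Real.pi * ((-1:ℤ):ℝ)) '' Ptrans (-1) = Bset := by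
      show (fun x : ℝ => x + 2 * Real.pi * ((-1:ℤ):ℝ)) '' imgB = Bset
      rw [imgB, image_image]
      have : (fun x : ℝ => x + 2*π + 2 * Real.pi * ((-1:ℤ):ℝ)) = id := by
        funext x; show x + 2*π + 2 * Real.pi * ((-1:ℤ):ℝ) = x; push_cast; ring
      rw [this, image_id]
    have eother : ∀ n : ℤ, n ≠ 0 → n ≠ -1 →
        (fun x : ℝ => x + 2 * Real.pi * (n:ℝ)) '' Ptrans n = ∅ := by
      intro n h1 h2
      rw [Ptrans]; simp [h1, h2]
    apply exact_partition
    · apply Subset.antisymm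
      · refine iUnion_subset fun n => ?_
        by_cases h1 : n = 0
        · subst h1; rw [e0]; exact hA01
        · by_cases h2 : n = -1
          · subst h2; rw [e1]; exact diff_subset
          · rw [eother n h1 h2]; exact empty_subset _
      · intro x hx
        by_cases hA : x ∈ Aset
        · exact mem_iUnion.2 ⟨0, by rw [e0]; exact hA⟩
        · exact mem_iUnion.2 ⟨-1, by rw [e1]; exact ⟨hx, hA⟩⟩
    · intro i j hij
      have himg : ∀ n : ℤ, (fun x : ℝ => x + 2 * Real.pi * (n:ℝ)) '' Ptrans n =
          (if n = 0 then Aset else if n = -1 then Bset else ∅) := by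
        intro n
        by_cases h1 : n = 0
        · subst h1; rw [e0]; simp
        · by_cases h2 : n = -1
          · subst h2; rw [e1]; simp
          · rw [eother n h1 h2]; simp [h1, h2]
      beta_reduce
      rw [himg i, himg j]
      split_ifs <;>
        first
          | omega
          | simp
          | (rw [Bset, inter_diff_self]; simp)
          | (rw [Bset, diff_inter_self]; simp)

def Tail : Set ℝ := ⋃ k, Ico (2*ak (k+1)) (2*bk (k+1))

def D1 : Set ℝ := Ico (3*π/2) (7*π/4) ∪ Tail
def D2 : Set ℝ := Ico π (3*π/2) \ Tail

lemma hTail_sub : Tail ⊆ Ico π (3*π/2) := by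
  have hπ := Real.pi_pos
  intro x hx
  obtain ⟨k, h1, h2⟩ := by simpa only [Tail, mem_iUnion, mem_Ico] using hx
  have h3 := pow_q_nonneg (k+1)
  have h4 := pow_q_le_one (k+1)
  have e : ((1:ℝ)/4)^(k+1) ≤ 1/4 := by
    calc ((1:ℝ)/4)^(k+1) = (1/4)^k * (1/4) := by rw [pow_succ]
    _ ≤ 1/4 := by nlinarith [pow_q_le_one k, pow_q_nonneg k]
  simp only [ak] at h1; simp only [bk] at h2
  exact ⟨by nlinarith, by nlinarith⟩

lemma imgA2 : (fun x => (2:ℝ)^(1:ℤ) * x) '' Aset = D1 := by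
  have hfun : (fun x : ℝ => (2:ℝ)^(1:ℤ) * x) = (fun x : ℝ => 2*x + 0) := by
    funext x; norm_num
  have himg : (fun x => (2:ℝ)^(1:ℤ) * x) '' Aset = ⋃ k, Ico (2 * ak k + 0) (2 * bk k + 0) := by
    rw [Aset, hfun, image_iUnion]
    exact iUnion_congr fun k => image_affine_Ico 2 0 _ _ (by norm_num)
  rw [himg]
  apply Subset.antisymm
  · refine iUnion_subset fun k => ?_
    cases k with
    | zero =>
      intro x hx
      left
      simp only [mem_Ico, ak, bk, pow_zero] at hx ⊢
      exact ⟨by nlinarith [hx.1], by nlinarith [hx.2]⟩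
    | succ n =>
      intro x hx
      right
      rw [Tail, mem_iUnion]
      exact ⟨n, by simpa using hx⟩
  · rintro x (hx | hx)
    · refine mem_iUnion.2 ⟨0, ?_⟩
      simp only [mem_Ico, ak, bk, pow_zero] at hx ⊢
      exact ⟨by nlinarith [hx.1], by nlinarith [hx.2]⟩
    · obtain ⟨k, hk⟩ := mem_iUnion.1 hx
      refine mem_iUnion.2 ⟨k+1, ?_⟩
      simpa using hk

lemma imgB2 : (fun x => (2:ℝ)^(-1:ℤ) * x) '' imgB = D2 := by
  have hc : (fun x => (2:ℝ)^(-1:ℤ) * x) '' imgB = (fun x : ℝ => (1/2)*x + π) '' Bset := by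
    rw [imgB, image_image]
    apply image_congr
    intro x _
    rw [zpow_neg_one]
    ring
  rw [hc, Bset, image_diff (affine_inj (1/2) π (by norm_num)), image_affine_Ico _ _ _ _ (by norm_num)]
  have hA : (fun x : ℝ => (1/2)*x + π) '' Aset = Tail := by
    rw [Aset, image_iUnion, Tail]
    apply iUnion_congr
    intro k
    rw [image_affine_Ico _ _ _ _ (by norm_num)]
    have e1 : (1:ℝ)/2 * ak k + π = 2 * ak (k+1) := by
      simp only [ak, pow_succ]; ring
    have e2 : (1:ℝ)/2 * bk k + π = 2 * bk (k+1) := by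
      simp only [bk, pow_succ]; ring
    rw [e1, e2]
  rw [hA, D2]
  congr 1
  congr 1 <;> ring

lemma hD12 : D1 ∩ D2 = ∅ := by
  have hπ := Real.pi_pos
  rw [D1, D2, union_inter_distrib_right]
  have h1 : Ico (3*π/2) (7*π/4) ∩ (Ico π (3*π/2) \ Tail) = ∅ := by
    rw [eq_empty_iff_forall_notMem]
    rintro x ⟨⟨h1, -⟩, ⟨-, h2⟩, -⟩
    linarith
  rw [h1, inter_diff_self, union_empty]

lemma hD1D2union : D1 ∪ D2 = Ico π (7*π/4) := by
  have hπ := Real.pi_pos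
  rw [D1, D2, union_assoc, union_diff_cancel hTail_sub, union_comm,
    Ico_union_Ico_eq_Ico (by linarith) (by linarith)]

def Pdil : ℤ → Set ℝ := fun n => if n = 1 then Aset else if n = -1 then imgB else ∅

lemma PdilUnion : (⋃ n : ℤ, Pdil n) = Gz := by
  apply Subset.antisymm
  · refine iUnion_subset fun n => ?_
    rw [Pdil]
    split_ifs
    · exact subset_union_left
    · exact subset_union_right
    · exact empty_subset _
  · rintro x (hx | hx)
    · exact mem_iUnion.2 ⟨1, by simp [Pdil, hx]⟩
    · exact mem_iUnion.2 ⟨-1, by simp [Pdil, hx]⟩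

lemma PdilDisj : ∀ i j : ℤ, i ≠ j → volume (Pdil i ∩ Pdil j) = 0 := by
  intro i j hij
  simp only [Pdil]
  split_ifs <;>
    first
      | omega
      | simp
      | (rw [hABdisj]; simp)
      | (rw [inter_comm, hABdisj]; simp)

lemma dilGz : DilCongruent Gz (Ico π (7*π/4)) := by
  refine ⟨Pdil, ?_, exact_partition PdilUnion PdilDisj, ?_⟩
  · intro n
    rw [Pdil]
    split_ifs
    · exact measA
    · exact measImgB
    · exact MeasurableSet.empty
  · have himg : ∀ n : ℤ, (fun x : ℝ => (2:ℝ)^(n:ℤ) * x) '' Pdil n =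
        (if n = 1 then D1 else if n = -1 then D2 else ∅) := by
      intro n
      by_cases h1 : n = 1
      · subst h1
        rw [show Pdil 1 = Aset from by norm_num [Pdil], if_pos rfl]
        exact imgA2
      · by_cases h2 : n = -1
        · subst h2
          rw [show Pdil (-1) = imgB from by norm_num [Pdil], if_neg h1, if_pos rfl]
          exact imgB2
        · rw [Pdil]; simp [h1, h2]
    apply exact_partition
    · have : (⋃ n : ℤ, (fun x : ℝ => (2:ℝ)^(n:ℤ) * x) '' Pdil n) = D1 ∪ D2 := by
        apply Subset.antisymm
        · refine iUnion_subset fun n => ?_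
          rw [himg n]
          split_ifs
          · exact subset_union_left
          · exact subset_union_right
          · exact empty_subset _
        · rintro x (hx | hx)
          · exact mem_iUnion.2 ⟨1, by rw [himg 1]; simpa using hx⟩
          · exact mem_iUnion.2 ⟨-1, by rw [himg (-1)]; simpa using hx⟩
      rw [this, hD1D2union]
    · intro i j hij
      beta_reduce
      rw [himg i, himg j]
      split_ifs <;>
        first
          | omega
          | simp
          | (rw [hD12]; simp)
          | (rw [inter_comm, hD12]; simp)

lemma symmDiff_union_subset (s u t : Set ℝ) : ((s ∪ t) ∆ (u ∪ t)) ⊆ s ∆ u := by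
  intro x hx
  rw [Set.mem_symmDiff] at hx ⊢
  rcases hx with ⟨h1, h2⟩ | ⟨h1, h2⟩ <;> simp only [mem_union] at * <;> tauto

lemma extend_partition (P : ℤ → Set ℝ) (G₀ A B : Set ℝ) (i₁ i₂ : ℤ) (hne : i₁ ≠ i₂)
    (hPA : IsAEPartition P G₀) (hdisj : ∀ x, x ∈ A ∪ B → x ∉ G₀) (hAB : A ∩ B ⊆ ∅) :
    IsAEPartition (fun n => P n ∪ (if n = i₁ then A else if n = i₂ then B else ∅))
      (G₀ ∪ (A ∪ B)) := by
  set E : ℤ → Set ℝ := fun n => if n = i₁ then A else if n = i₂ then B else ∅ with hE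
  have hEsub : ∀ n, E n ⊆ A ∪ B := by
    intro n
    show (if n = i₁ then A else if n = i₂ then B else ∅) ⊆ A ∪ B
    split_ifs
    · exact subset_union_left
    · exact subset_union_right
    · exact empty_subset _
  have hEE : ∀ i j : ℤ, i ≠ j → E i ∩ E j ⊆ A ∩ B := by
    intro i j hij
    show (if i = i₁ then A else if i = i₂ then B else ∅) ∩ (if j = i₁ then A else if j = i₂ then B else ∅) ⊆ A ∩ B
    split_ifs <;> first | omega | simp | exact fun x hx => hx | exact fun x hx => ⟨hx.2, hx.1⟩
  have hPe : ∀ n : ℤ, volume (P n ∩ (A ∪ B)) = 0 := by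
    intro n
    refine measure_mono_null ?_ hPA.1
    rintro x ⟨hx1, hx2⟩
    rw [Set.mem_symmDiff]
    exact Or.inr ⟨mem_iUnion.2 ⟨n, hx1⟩, hdisj x hx2⟩
  constructor
  · have hQU : (⋃ n, (P n ∪ E n)) = (⋃ n, P n) ∪ (A ∪ B) := by
      apply Subset.antisymm
      · refine iUnion_subset fun n => union_subset ?_ ?_
        · exact (subset_iUnion P n).trans subset_union_left
        · exact (hEsub n).trans subset_union_right
      · refine union_subset ?_ (union_subset ?_ ?_)
        · exact iUnion_mono fun n => subset_union_left
        · intro x hx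
          refine mem_iUnion.2 ⟨i₁, Or.inr ?_⟩
          show x ∈ if i₁ = i₁ then A else if i₁ = i₂ then B else ∅
          simp [hx]
        · intro x hx
          refine mem_iUnion.2 ⟨i₂, Or.inr ?_⟩
          show x ∈ if i₂ = i₁ then A else if i₂ = i₂ then B else ∅
          simp [hne.symm, hx]
    rw [hQU]
    exact measure_mono_null (symmDiff_union_subset _ _ _) hPA.1
  · intro i j hij
    have hsub : (P i ∪ E i) ∩ (P j ∪ E j) ⊆
        ((P i ∩ P j) ∪ (P i ∩ (A ∪ B))) ∪ ((P j ∩ (A ∪ B)) ∪ (A ∩ B)) := by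
      rintro x ⟨hx1 | hx1, hx2 | hx2⟩
      · exact Or.inl (Or.inl ⟨hx1, hx2⟩)
      · exact Or.inl (Or.inr ⟨hx1, hEsub j hx2⟩)
      · exact Or.inr (Or.inl ⟨hx2, hEsub i hx1⟩)
      · exact Or.inr (Or.inr (hEE i j hij ⟨hx1, hx2⟩))
    refine measure_mono_null hsub ?_
    refine measure_union_null (measure_union_null (hPA.2 i j hij) (hPe i)) ?_
    refine measure_union_null (hPe j) ?_
    exact measure_mono_null hAB (by simp)


lemma goodGz : GoodGzero Gz := ⟨measGz, hGzsub, transGz, dilGz⟩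

/-- Example 8 of the paper.  Let `E = [−2π, −π) ∪ [π, 2π)`.  There
exists `G₀` as above, and for any such `G₀` the set
`G = [−π, −π/2) ∪ G₀ ∪ [7π/2, 4π)` is a dyadic wavelet set contained in
`2E ∪ E ∪ (1/2)E = [−4π, −π/2) ∪ [π/2, 4π)` such that `(E, G)` is not an
interpolation pair. -/
theorem stmt_13 :
    (∃ G₀ : Set ℝ, GoodGzero G₀) ∧
    (∀ G₀ : Set ℝ, GoodGzero G₀ →
      IsDyadicWaveletSet (Ico (-π) (-(π / 2)) ∪ G₀ ∪ Ico (7 * π / 2) (4 * π)) ∧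
      (Ico (-π) (-(π / 2)) ∪ G₀ ∪ Ico (7 * π / 2) (4 * π)) ⊆
        Ico (-(4 * π)) (-(π / 2)) ∪ Ico (π / 2) (4 * π) ∧
      ∀ σ : ℝ → ℝ,
        IsInterpolationMap (Ico (-(2 * π)) (-π) ∪ Ico π (2 * π))
          (Ico (-π) (-(π / 2)) ∪ G₀ ∪ Ico (7 * π / 2) (4 * π)) σ →
        ¬ (∀ᵐ s : ℝ ∂volume, σ (σ s) = s)) := by
  
  have hπ := Real.pi_pos
  constructor
  · exact ⟨Gz, goodGz⟩
  · intro G₀ hG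
    obtain ⟨hGm, hGsub, hGtrans, hGdil⟩ := hG
    set X1 : Set ℝ := Ico (-π) (-(π/2)) with hX1
    set X2 : Set ℝ := Ico (7*π/2) (4*π) with hX2
    have hGdisjX : ∀ x, x ∈ X1 ∪ X2 → x ∉ G₀ := by
      intro x hx hxG
      rcases hGsub hxG with h | h <;> rw [mem_Ico] at h <;>
        rcases hx with h' | h' <;> simp only [hX1, hX2, mem_Ico] at h' <;> linarith
    have hX12 : X1 ∩ X2 ⊆ (∅ : Set ℝ) := by
      rintro x ⟨h1, h2⟩
      simp only [hX1, hX2, mem_Ico] at h1 h2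
      exact (by linarith : False).elim
    have hGform : G₀ ∪ (X1 ∪ X2) = X1 ∪ G₀ ∪ X2 := by
      ext x; simp only [mem_union]; tauto
    -- translation tiling
    obtain ⟨P, hPm, hPA, hPB⟩ := hGtrans
    have htrans1 := extend_partition P G₀ X1 X2 1 (-1) (by norm_num) hPA hGdisjX hX12
    rw [hGform] at htrans1
    have himgX1 : (fun x : ℝ => x + 2 * Real.pi * ((1:ℤ):ℝ)) '' X1 = Ico π (3*π/2) := by
      have hfn : (fun x : ℝ => x + 2 * Real.pi * ((1:ℤ):ℝ)) = fun x => 1*x + 2*π := by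
        funext x; push_cast; ring
      rw [hX1, hfn, image_affine_Ico _ _ _ _ one_pos]
      congr 1 <;> ring
    have himgX2 : (fun x : ℝ => x + 2 * Real.pi * ((-1:ℤ):ℝ)) '' X2 = Ico (3*π/2) (2*π) := by
      have hfn : (fun x : ℝ => x + 2 * Real.pi * ((-1:ℤ):ℝ)) = fun x => 1*x + (-(2*π)) := by
        funext x; push_cast; ring
      rw [hX2, hfn, image_affine_Ico _ _ _ _ one_pos]
      congr 1 <;> ring
    have hdisjT : ∀ x, x ∈ Ico π (3*π/2) ∪ Ico (3*π/2) (2*π) → x ∉ Ico 0 π := by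
      intro x hx hx0
      rw [mem_Ico] at hx0
      rcases hx with h | h <;> rw [mem_Ico] at h <;> linarith
    have hABT : Ico π (3*π/2) ∩ Ico (3*π/2) (2*π) ⊆ (∅ : Set ℝ) := by
      rintro x ⟨h1, h2⟩
      rw [mem_Ico] at h1 h2
      exact (by linarith : False).elim
    have htrans2 := extend_partition (fun n : ℤ => (fun x => x + 2 * Real.pi * (n:ℝ)) '' P n)
      (Ico 0 π) (Ico π (3*π/2)) (Ico (3*π/2) (2*π)) 1 (-1) (by norm_num) hPB hdisjT hABT
    have hfeq : (fun n : ℤ => (fun x => x + 2 * Real.pi * (n:ℝ)) ''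
          (P n ∪ (if n = 1 then X1 else if n = -1 then X2 else ∅)))
        = (fun n : ℤ => ((fun x => x + 2 * Real.pi * (n:ℝ)) '' P n) ∪
            (if n = 1 then Ico π (3*π/2) else if n = -1 then Ico (3*π/2) (2*π) else ∅)) := by
      funext n
      rw [image_union]
      congr 1
      by_cases h1 : n = 1
      · subst h1; rw [if_pos rfl, if_pos rfl]; exact himgX1
      · by_cases h2 : n = -1
        · subst h2; rw [if_neg h1, if_pos rfl, if_neg h1, if_pos rfl]; exact himgX2
        · rw [if_neg h1, if_neg h2, if_neg h1, if_neg h2]; exact image_empty _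
    have hIco2 : Ico (0:ℝ) π ∪ (Ico π (3*π/2) ∪ Ico (3*π/2) (2*π)) = Ico 0 (2*π) := by
      rw [Ico_union_Ico_eq_Ico (by linarith) (by linarith),
        Ico_union_Ico_eq_Ico (by linarith) (by linarith)]
    rw [hIco2, ← hfeq] at htrans2
    have htileT := tiling_of_congruent (fun (n : ℤ) (x : ℝ) => x + 2 * Real.pi * (n:ℝ))
      (by intro x; simp)
      (by intro m n x; push_cast; ring)
      (by intro n N hN
          show volume ((fun x : ℝ => x + 2 * Real.pi * (n:ℝ)) ⁻¹' N) = 0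
          have hfn : (fun x : ℝ => x + 2 * Real.pi * (n:ℝ)) = fun x => 1*x + 2*Real.pi*(n:ℝ) := by
            funext x; ring
          rw [hfn]; exact affine_preimage_null _ _ one_ne_zero hN)
      (Ico 0 (2*π)) (X1 ∪ G₀ ∪ X2) (ae_of_all _ transFD)
      _ htrans1 htrans2
    -- dilation tiling
    obtain ⟨R, hRm, hRA, hRB⟩ := hGdil
    have hdil1 := extend_partition R G₀ X1 X2 0 (-1) (by norm_num) hRA hGdisjX hX12
    rw [hGform] at hdil1
    have himgX1d : (fun x : ℝ => (2:ℝ)^((0:ℤ)) * x) '' X1 = X1 := by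
      have hfn : (fun x : ℝ => (2:ℝ)^((0:ℤ)) * x) = id := by funext x; simp
      rw [hfn, image_id]
    have himgX2d : (fun x : ℝ => (2:ℝ)^((-1:ℤ)) * x) '' X2 = Ico (7*π/4) (2*π) := by
      have hfn : (fun x : ℝ => (2:ℝ)^((-1:ℤ)) * x) = fun x => (1/2)*x + 0 := by
        funext x; rw [zpow_neg_one]; ring
      rw [hX2, hfn, image_affine_Ico _ _ _ _ (by norm_num)]
      congr 1 <;> ring
    have hdisjD : ∀ x, x ∈ X1 ∪ Ico (7*π/4) (2*π) → x ∉ Ico π (7*π/4) := by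
      intro x hx hx0
      rw [mem_Ico] at hx0
      rcases hx with h | h <;> simp only [hX1, mem_Ico] at h <;> linarith
    have hABD : X1 ∩ Ico (7*π/4) (2*π) ⊆ (∅ : Set ℝ) := by
      rintro x ⟨h1, h2⟩
      simp only [hX1, mem_Ico] at h1
      rw [mem_Ico] at h2
      exact (by linarith : False).elim
    have hdil2 := extend_partition (fun n : ℤ => (fun x => (2:ℝ)^n * x) '' R n)
      (Ico π (7*π/4)) X1 (Ico (7*π/4) (2*π)) 0 (-1) (by norm_num) hRB hdisjD hABD
    have hfeqd : (fun n : ℤ => (fun x => (2:ℝ)^n * x) ''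
          (R n ∪ (if n = 0 then X1 else if n = -1 then X2 else ∅)))
        = (fun n : ℤ => ((fun x => (2:ℝ)^n * x) '' R n) ∪
            (if n = 0 then X1 else if n = -1 then Ico (7*π/4) (2*π) else ∅)) := by
      funext n
      rw [image_union]
      congr 1
      by_cases h1 : n = 0
      · subst h1; rw [if_pos rfl, if_pos rfl]; exact himgX1d
      · by_cases h2 : n = -1
        · subst h2; rw [if_neg h1, if_pos rfl, if_neg h1, if_pos rfl]; exact himgX2d
        · rw [if_neg h1, if_neg h2, if_neg h1, if_neg h2]; exact image_empty _
    have hIcoD : Ico π (7*π/4) ∪ (X1 ∪ Ico (7*π/4) (2*π)) = Ico (-π) (-(π/2)) ∪ Ico π (2*π) := by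
      ext x
      simp only [hX1, mem_union, mem_Ico]
      constructor
      · rintro (⟨h1, h2⟩ | (⟨h1, h2⟩ | ⟨h1, h2⟩))
        · right; exact ⟨h1, by linarith⟩
        · left; exact ⟨h1, h2⟩
        · right; exact ⟨by linarith, h2⟩
      · rintro (⟨h1, h2⟩ | ⟨h1, h2⟩)
        · right; left; exact ⟨h1, h2⟩
        · by_cases h : x < 7*π/4
          · left; exact ⟨h1, h⟩
          · right; right; exact ⟨by linarith, h2⟩
    rw [hIcoD, ← hfeqd] at hdil2
    have htileD := tiling_of_congruent (fun (n : ℤ) (x : ℝ) => (2:ℝ)^n * x)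
      (by intro x; simp)
      (by intro m n x
          show (2:ℝ)^m * ((2:ℝ)^n * x) = (2:ℝ)^(m+n) * x
          rw [← mul_assoc, ← zpow_add₀ (two_ne_zero)])
      (by intro n N hN
          show volume ((fun x : ℝ => (2:ℝ)^n * x) ⁻¹' N) = 0
          have hfn : (fun x : ℝ => (2:ℝ)^n * x) = fun x => (2:ℝ)^n * x + 0 := by
            funext x; ring
          rw [hfn]; exact affine_preimage_null _ _ (two_zpow_pos n).ne' hN)
      (Ico (-π) (-(π/2)) ∪ Ico π (2*π)) (X1 ∪ G₀ ∪ X2) dilFD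
      _ hdil1 hdil2
    refine ⟨⟨?_, htileT, htileD⟩, ?_, ?_⟩
    · exact ((show MeasurableSet X1 by rw [hX1]; exact measurableSet_Ico).union hGm).union
        (show MeasurableSet X2 by rw [hX2]; exact measurableSet_Ico)
    · intro x hx
      rcases hx with (hx | hx) | hx
      · simp only [hX1, mem_Ico] at hx
        left; rw [mem_Ico]; exact ⟨by linarith, by linarith⟩
      · rcases hGsub hx with h | h <;> rw [mem_Ico] at h <;>
          (right; rw [mem_Ico]; exact ⟨by linarith, by linarith⟩)
      · simp only [hX2, mem_Ico] at hx
        right; rw [mem_Ico]; exact ⟨by linarith, by linarith⟩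
    · intro σ hσ hcontra
      obtain ⟨-, -, hE, hDil⟩ := hσ
      have hstep : ∀ y : ℝ, y ∈ Ico (3*π/2) (15*π/8) → ∀ v : ℝ, v ∈ X1 ∪ G₀ ∪ X2 →
          ∀ n : ℤ, v - y = 2*π*(n:ℝ) → v = y + 2*π := by
        intro y hy v hv n hn
        rw [mem_Ico] at hy
        have hv' : v = y + 2*π*(n:ℝ) := by linarith
        rcases hv with (hv | hv) | hv
        · exfalso
          simp only [hX1, mem_Ico] at hv
          have hn1 : ¬ n ≤ -2 := fun h => by
            have : (n:ℝ) ≤ -2 := by exact_mod_cast h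
            nlinarith
          have hn2 : ¬ (-1:ℤ) ≤ n := fun h => by
            have : (-1:ℝ) ≤ n := by exact_mod_cast h
            nlinarith
          omega
        · exfalso
          rcases hGsub hv with h | h <;> rw [mem_Ico] at h
          · rcases le_or_gt n (-1) with h' | h'
            · have : (n:ℝ) ≤ -1 := by exact_mod_cast h'
              nlinarith
            · have : (0:ℝ) ≤ n := by exact_mod_cast (by omega : (0:ℤ) ≤ n)
              nlinarith
          · rcases le_or_gt n 0 with h' | h'
            · have : (n:ℝ) ≤ 0 := by exact_mod_cast h'
              nlinarith
            · have : (1:ℝ) ≤ n := by exact_mod_cast h'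
              nlinarith
        · simp only [hX2, mem_Ico] at hv
          have hn1 : ¬ n ≤ 0 := fun h => by
            have : (n:ℝ) ≤ 0 := by exact_mod_cast h
            nlinarith
          have hn2 : ¬ (2:ℤ) ≤ n := fun h => by
            have : (2:ℝ) ≤ n := by exact_mod_cast h
            nlinarith
          have hn3 : n = 1 := by omega
          rw [hv', hn3]
          push_cast
          ring
      have hE2 := ae_affine (1/2) π (by norm_num) hE
      have hD2 := ae_affine 1 (2*π) one_ne_zero (hDil 1)
      have key : ∀ᵐ s : ℝ ∂volume, s ∉ Ico (3*π/2) (7*π/4) := by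
        filter_upwards [hE, hE2, hD2, hcontra] with s h1 h2 h3 h4 hs
        rw [mem_Ico] at hs
        have hsE : s ∈ Ico (-(2*π)) (-π) ∪ Ico π (2*π) :=
          Or.inr (by rw [mem_Ico]; exact ⟨by linarith, by linarith⟩)
        obtain ⟨hσG, n, hn⟩ := h1 hsE
        have e1 : σ s = s + 2*π :=
          hstep s ⟨by linarith, by linarith⟩ (σ s) hσG n hn
        have huE : (1/2)*s + π ∈ Ico (-(2*π)) (-π) ∪ Ico π (2*π) :=
          Or.inr (by rw [mem_Ico]; exact ⟨by linarith, by linarith⟩)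
        obtain ⟨hσuG, m, hm⟩ := h2 huE
        have e2 : σ ((1/2)*s + π) = (1/2)*s + π + 2*π :=
          hstep _ ⟨by linarith, by linarith⟩ _ hσuG m hm
        have harg : (2:ℝ)^(-1:ℤ)*((1:ℝ)*s+2*π) = (1/2)*s + π := by
          rw [zpow_neg_one]; ring
        have h3' := h3 (by rw [harg]; exact huE)
        rw [harg, e2] at h3'
        rw [show (1:ℝ)*s + 2*π = s + 2*π from by ring] at h3'
        rw [e1] at h4
        rw [h4] at h3'
        rw [zpow_one] at h3'
        linarith
      have hvol : volume (Ico (3*π/2) (7*π/4)) = 0 := by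
        rw [ae_iff] at key
        refine measure_mono_null (fun x hx => ?_) key
        simp only [mem_setOf_eq, not_not]
        exact hx
      rw [Real.volume_Ico] at hvol
      have := ENNReal.ofReal_eq_zero.1 hvol
      linarith
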